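/- Let d ≥ 2 and n ≥ 3. Let f : Fin d → Fin d → Fin d → Fin d be a local rule that is not balanced, i.e. there exists a state s ∈ Fin d such that the number of triples (x,y,z) ∈ (Fin d)³ with f x y z = s is not equal to d². Then the global map F : (ZMod n → Fin d) → (ZMod n → Fin d) of the n-cell periodic-boundary CA, defined by F(c)(i) = f (c(i−1)) (c(i)) (c(i+1)), is not bijective. -/

import Mathlib

lemma card_fix {ι β : Type*} [Fintype ι] [DecidableEq ι] [Fintype β] [DecidableEq β]
    (S : Finset ι) (g₀ : ι → β) :
    (Finset.univ.filter (fun c : ι → β => ∀ i ∈ S, c i = g₀ i)).card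
      = Fintype.card β ^ (Fintype.card ι - S.card) := by
  rw [← Fintype.card_subtype]
  have e : {c : ι → β // ∀ i ∈ S, c i = g₀ i} ≃ ({x : ι // x ∉ S} → β) :=
    { toFun := fun c x => c.1 x.1
      invFun := fun h => ⟨fun i => if hi : i ∈ S then g₀ i else h ⟨i, hi⟩,
        fun i hi => dif_pos hi⟩
      left_inv := fun c => by
        ext i; dsimp; split_ifs with hi
        · exact (c.2 i hi).symm
        · rfl
      right_inv := fun h => by ext x; dsimp; rw [dif_neg x.2] }
  rw [Fintype.card_congr e, Fintype.card_fun]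
  congr 1
  rw [Fintype.card_subtype]
  simp [Finset.filter_not, Finset.card_sdiff_of_subset (Finset.subset_univ _)]

theorem stmt_0 (d n : ℕ) (hd : 2 ≤ d) (hn : 3 ≤ n)
    (f : Fin d → Fin d → Fin d → Fin d)
    (hf : ∃ s : Fin d,
      (Finset.univ.filter
        (fun t : Fin d × Fin d × Fin d => f t.1 t.2.1 t.2.2 = s)).card ≠ d ^ 2) :
    ¬ Function.Bijective
      (fun (c : ZMod n → Fin d) (i : ZMod n) => f (c (i - 1)) (c i) (c (i + 1))) := by
  intro hF
  obtain ⟨s, hs⟩ := hf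
  apply hs
  haveI : NeZero n := ⟨by omega⟩
  set F : (ZMod n → Fin d) → (ZMod n → Fin d) :=
    fun c i => f (c (i - 1)) (c i) (c (i + 1)) with hFdef
  -- distinctness of the three coordinates
  have h1 : ((1 : ℕ) : ZMod n) ≠ 0 := by
    intro h; rw [ZMod.natCast_eq_zero_iff] at h
    have := Nat.le_of_dvd (by norm_num) h; omega
  have h2 : ((2 : ℕ) : ZMod n) ≠ 0 := by
    intro h; rw [ZMod.natCast_eq_zero_iff] at h
    have := Nat.le_of_dvd (by norm_num) h; omega
  have h1' : (1 : ZMod n) ≠ 0 := by simpa using h1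
  have h12 : (0 : ZMod n) - 1 ≠ 0 := by
    intro h; apply h1'; linear_combination -h
  have h13 : (0 : ZMod n) - 1 ≠ 0 + 1 := by
    intro h; apply h2; push_cast; linear_combination -h
  have h23 : (0 : ZMod n) ≠ 0 + 1 := by
    intro h; apply h1'; linear_combination -h
  set i1 : ZMod n := 0 - 1
  set i2 : ZMod n := 0
  set i3 : ZMod n := 0 + 1
  set T : Finset (Fin d × Fin d × Fin d) :=
    Finset.univ.filter (fun t => f t.1 t.2.1 t.2.2 = s) with hT
  set g : (ZMod n → Fin d) → Fin d × Fin d × Fin d := fun c => (c i1, c i2, c i3) with hg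
  -- fiber count for each triple
  have fiber : ∀ t : Fin d × Fin d × Fin d,
      (Finset.univ.filter (fun c : ZMod n → Fin d => g c = t)).card = d ^ (n - 3) := by
    intro t
    have heq : (Finset.univ.filter (fun c : ZMod n → Fin d => g c = t))
        = Finset.univ.filter (fun c : ZMod n → Fin d =>
            ∀ i ∈ ({i1, i2, i3} : Finset (ZMod n)), c i =
              (fun j => if j = i1 then t.1 else if j = i2 then t.2.1 else t.2.2) i) := by
      apply Finset.filter_congr
      intro c _
      simp only [hg, Prod.ext_iff, Finset.mem_insert, Finset.mem_singleton]
      constructor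
      · rintro ⟨ha, hb, hc⟩ i hi
        rcases hi with rfl | rfl | rfl
        · simp [ha]
        · simp [h12.symm, hb]
        · simp [h13.symm, h23.symm, hc]
      · intro h
        refine ⟨?_, ?_, ?_⟩
        · simpa using h i1 (by simp)
        · simpa [h12.symm] using h i2 (by simp)
        · simpa [h13.symm, h23.symm] using h i3 (by simp)
    rw [heq, card_fix]
    have hcard3 : ({i1, i2, i3} : Finset (ZMod n)).card = 3 := by
      rw [Finset.card_insert_of_notMem (by simp [h12, h13]),
        Finset.card_insert_of_notMem (by simp [h23]), Finset.card_singleton]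
    rw [hcard3, Fintype.card_fin, ZMod.card]
  -- count configurations with (F c) 0 = s, first way
  have key1 : (Finset.univ.filter (fun c : ZMod n → Fin d => F c 0 = s)).card
      = T.card * d ^ (n - 3) := by
    rw [Finset.card_eq_sum_card_fiberwise (f := g) (t := T)
      (fun c hc => by
        simp only [Finset.mem_coe, Finset.mem_filter, Finset.mem_univ, true_and, hT] at hc ⊢
        exact hc)]
    have : ∀ t ∈ T, ((Finset.univ.filter (fun c : ZMod n → Fin d => F c 0 = s)).filter
        (fun c => g c = t)).card = d ^ (n - 3) := by
      intro t ht
      simp only [Finset.mem_filter, Finset.mem_univ, true_and, hT] at ht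
      rw [Finset.filter_filter]
      have hset : (Finset.univ.filter (fun c : ZMod n → Fin d => F c 0 = s ∧ g c = t))
          = Finset.univ.filter (fun c => g c = t) := by
        ext c
        simp only [Finset.mem_filter, Finset.mem_univ, true_and]
        constructor
        · exact fun h => h.2
        · intro h
          refine ⟨?_, h⟩
          have h' : (c i1, c i2, c i3) = t := h
          show f (c i1) (c i2) (c i3) = s
          simp only [← h'] at ht
          exact ht
      rw [hset]
      exact fiber t
    rw [Finset.sum_congr rfl this, Finset.sum_const, smul_eq_mul]
  -- second way, using bijectivity
  have key2 : (Finset.univ.filter (fun c : ZMod n → Fin d => F c 0 = s)).card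
      = d ^ (n - 1) := by
    rw [← Fintype.card_subtype]
    have e : {c : ZMod n → Fin d // F c 0 = s} ≃ {e : ZMod n → Fin d // e 0 = s} :=
      (Equiv.ofBijective F hF).subtypeEquiv (fun c => Iff.rfl)
    rw [Fintype.card_congr e, Fintype.card_subtype]
    have heq : (Finset.univ.filter (fun e : ZMod n → Fin d => e 0 = s))
        = Finset.univ.filter (fun e : ZMod n → Fin d =>
            ∀ i ∈ ({(0 : ZMod n)} : Finset (ZMod n)), e i = (fun _ => s) i) := by
      apply Finset.filter_congr; intro e _; simp
    rw [heq, card_fix, Finset.card_singleton, Fintype.card_fin, ZMod.card]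
  rw [key1] at key2
  have hdpos : 0 < d ^ (n - 3) := Nat.pow_pos (by omega)
  have : d ^ (n - 1) = d ^ 2 * d ^ (n - 3) := by
    rw [← pow_add]; congr 1; omega
  rw [this] at key2
  exact Nat.eq_of_mul_eq_mul_right hdpos key2
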